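/- Consider the involution τ̂₂ of Z² defined by (k, l) ↦ (l, k) and the cone ω = Cone((1,0), (1,2)) in Q². There is no lattice automorphism φ of Z² such that the conjugated involution φ^{-1} ∘ τ̂₂ ∘ φ maps ω onto ω. -/

import Mathlib

/-- The cone Cone((1,0), (1,2)) in ℚ². -/
def cone16 : Set (Fin 2 → ℚ) :=
  {x | ∃ a b : ℚ, 0 ≤ a ∧ 0 ≤ b ∧ x = a • ![(1 : ℚ), 0] + b • ![(1 : ℚ), 2]}

lemma cone16_mem_iff (x : Fin 2 → ℚ) : x ∈ cone16 ↔ 0 ≤ x 1 ∧ x 1 ≤ 2 * x 0 := by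
  constructor
  · rintro ⟨a, b, ha, hb, rfl⟩
    simp [Matrix.cons_val_zero, Matrix.cons_val_one]
    constructor <;> nlinarith
  · rintro ⟨h1, h2⟩
    refine ⟨x 0 - x 1 / 2, x 1 / 2, by linarith, by linarith, ?_⟩
    funext i
    fin_cases i <;> simp

/-- There is no lattice automorphism P ∈ GL₂(ℤ) such that the involution
P⁻¹ ∘ τ̂₂ ∘ P conjugate to the swap involution τ̂₂(k,l) = (l,k) maps the cone
Cone((1,0),(1,2)) ⊂ ℚ² onto itself. -/
theorem stmt_16 :
    ¬ ∃ P : Matrix (Fin 2) (Fin 2) ℤ, IsUnit P.det ∧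
      (⇑(Matrix.toLin' ((P⁻¹ * !![0, 1; 1, 0] * P).map ((↑) : ℤ → ℚ)))) '' cone16
        = cone16 := by
  rintro ⟨P, hU, hC⟩
  set τ : Matrix (Fin 2) (Fin 2) ℤ := !![0, 1; 1, 0] with hτ
  set M : Matrix (Fin 2) (Fin 2) ℤ := P⁻¹ * τ * P with hMdef
  -- trace and determinant of M
  have hPP : P * P⁻¹ = 1 := Matrix.mul_nonsing_inv P hU
  have hPP' : P⁻¹ * P = 1 := Matrix.nonsing_inv_mul P hU
  have htr : M.trace = 0 := by
    have h : M.trace = (P * P⁻¹ * τ).trace := by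
      rw [hMdef, Matrix.trace_mul_cycle]
    rw [h, hPP, Matrix.one_mul, hτ]
    simp [Matrix.trace_fin_two]
  have hdet : M.det = -1 := by
    have : M.det = P⁻¹.det * τ.det * P.det := by
      rw [hMdef, Matrix.det_mul, Matrix.det_mul]
    rw [this]
    have h1 : P⁻¹.det * P.det = 1 := by
      rw [← Matrix.det_mul, hPP']; simp
    have hτd : τ.det = -1 := by rw [hτ]; simp [Matrix.det_fin_two_of]
    rw [hτd]; nlinarith [h1]
  set a := M 0 0 with ha
  set b := M 0 1 with hb
  set c := M 1 0 with hc
  set d := M 1 1 with hd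
  have htr2 : a + d = 0 := by rw [← htr]; simp [Matrix.trace_fin_two, ha, hd]
  have hdet2 : a * d - b * c = -1 := by rw [← hdet, Matrix.det_fin_two]
  -- the two generating rays are in the cone
  have hg1 : (![(1:ℚ),0]) ∈ cone16 := by
    rw [cone16_mem_iff]; norm_num
  have hg2 : (![(1:ℚ),2]) ∈ cone16 := by
    rw [cone16_mem_iff]; norm_num
  -- images of generators
  have happly : ∀ v : Fin 2 → ℚ,
      (Matrix.toLin' (M.map ((↑) : ℤ → ℚ))) v = (M.map ((↑) : ℤ → ℚ)).mulVec v :=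
    fun v => Matrix.toLin'_apply _ v
  have him1 : (Matrix.toLin' (M.map ((↑) : ℤ → ℚ))) ![1,0] ∈ cone16 := by
    rw [← hC]; exact Set.mem_image_of_mem _ hg1
  have him2 : (Matrix.toLin' (M.map ((↑) : ℤ → ℚ))) ![1,2] ∈ cone16 := by
    rw [← hC]; exact Set.mem_image_of_mem _ hg2
  rw [happly, cone16_mem_iff] at him1 him2
  have e1 : (M.map ((↑) : ℤ → ℚ)).mulVec ![1,0] 0 = (a : ℚ) := by
    simp [Matrix.mulVec, dotProduct, Fin.sum_univ_two, Matrix.map_apply, ha]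
  have e2 : (M.map ((↑) : ℤ → ℚ)).mulVec ![1,0] 1 = (c : ℚ) := by
    simp [Matrix.mulVec, dotProduct, Fin.sum_univ_two, Matrix.map_apply, hc]
  have e3 : (M.map ((↑) : ℤ → ℚ)).mulVec ![1,2] 0 = (a : ℚ) + 2 * b := by
    simp [Matrix.mulVec, dotProduct, Fin.sum_univ_two, Matrix.map_apply, ha, hb]
    ring
  have e4 : (M.map ((↑) : ℤ → ℚ)).mulVec ![1,2] 1 = (c : ℚ) + 2 * d := by
    simp [Matrix.mulVec, dotProduct, Fin.sum_univ_two, Matrix.map_apply, hc, hd]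
    ring
  rw [e1, e2] at him1
  rw [e3, e4] at him2
  -- translate to integer inequalities
  have i1 : 0 ≤ c := by exact_mod_cast him1.1
  have i2 : c ≤ 2 * a := by exact_mod_cast him1.2
  have i3 : 0 ≤ c + 2 * d := by exact_mod_cast him2.1
  have i4 : c + 2 * d ≤ 2 * (a + 2 * b) := by
    have h : ((c + 2 * d : ℤ) : ℚ) ≤ ((2 * (a + 2 * b) : ℤ) : ℚ) := by
      push_cast; linarith [him2.2]
    exact_mod_cast h
  -- deduce entries
  have hdeq : d = -a := by omega
  have hc2a : c = 2 * a := by omega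
  have hfac : a * (a + 2 * b) = 1 := by nlinarith [hdet2, hdeq, hc2a]
  have ha0 : 0 ≤ a := by omega
  have ha1 : a = 1 := by
    rcases Int.eq_one_or_neg_one_of_mul_eq_one hfac with h1 | h1
    · exact h1
    · omega
  have hb0 : b = 0 := by
    rw [ha1] at hfac; omega
  have m00 : M 0 0 = 1 := by rw [← ha, ha1]
  have m01 : M 0 1 = 0 := by rw [← hb, hb0]
  have m10 : M 1 0 = 2 := by rw [← hc]; omega
  have m11 : M 1 1 = -1 := by rw [← hd]; omega
  -- now M = !![1,0;2,-1]
  have hMval : M = !![1, 0; 2, -1] := by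
    ext i j
    fin_cases i <;> fin_cases j
    · simpa using m00
    · simpa using m01
    · simpa using m10
    · simpa using m11
  -- τ * P = P * M
  have hτP : τ * P = P * !![1, 0; 2, -1] := by
    have : P * M = τ * P := by
      rw [hMdef, ← Matrix.mul_assoc, ← Matrix.mul_assoc, hPP, Matrix.one_mul]
    rw [← hMval, this]
  -- read off entries
  set p := P 0 0 with hp
  set q := P 0 1 with hq
  set r := P 1 0 with hr
  set s := P 1 1 with hs
  have E := fun i j => congrFun (congrFun hτP i) j
  have E00 : r = p + 2 * q := by
    have h := E 0 0
    simp [hτ, Matrix.mul_apply, Fin.sum_univ_two, ← hp, ← hq, ← hr, ← hs] at h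
    omega
  have E01 : s = -q := by
    have h := E 0 1
    simp [hτ, Matrix.mul_apply, Fin.sum_univ_two, ← hp, ← hq, ← hr, ← hs] at h
    omega
  -- determinant of P is even: contradiction
  have hdetP : P.det = p * s - q * r := Matrix.det_fin_two P
  have : P.det = -2 * (q * (p + q)) := by
    rw [hdetP, E00, E01]; ring
  rw [Int.isUnit_iff] at hU
  omega
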